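/- For any commutative ring A and any natural number k ≥ 2, the ring of formal Laurent series A((t)) is weakly k-fold stable; moreover the witnessing unit can be taken to be t^i for a suitable integer i. -/

import Mathlib

lemma aux_isUnit_single {A : Type*} [CommRing A] (i : ℤ) :
    IsUnit (HahnSeries.single i (1 : A) : LaurentSeries A) := by
  refine IsUnit.of_mul_eq_one (HahnSeries.single (-i) (1 : A)) ?_
  rw [HahnSeries.single_mul_single, add_neg_cancel, mul_one, HahnSeries.single_zero_one]

lemma aux_isUnit_leadingCoeff_one {A : Type*} [CommRing A] [Nontrivial A]
    {g : LaurentSeries A} (h : g.leadingCoeff = 1) : IsUnit g := by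
  have hg : g ≠ 0 := by
    intro hz
    rw [hz, HahnSeries.leadingCoeff_zero] at h
    exact zero_ne_one h
  have hps : IsUnit (g.powerSeriesPart : PowerSeries A) := by
    rw [PowerSeries.isUnit_iff_constantCoeff]
    have : (PowerSeries.constantCoeff (R := A)) g.powerSeriesPart = g.leadingCoeff := by
      rw [← PowerSeries.coeff_zero_eq_constantCoeff_apply,
        LaurentSeries.powerSeriesPart_coeff, Nat.cast_zero, add_zero,
        HahnSeries.leadingCoeff_eq]
    rw [this, h]
    exact isUnit_one
  have := g.single_order_mul_powerSeriesPart
  rw [← this]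
  exact (aux_isUnit_single g.order).mul (hps.map (HahnSeries.ofPowerSeries ℤ A))

/-- for any commutative ring `A` and `k ≥ 2`, the ring of formal Laurent
series `A((t))` is weakly `k`-fold stable, with witnessing unit a power `t^i` of `t`:
for any `k - 1` Laurent series there is `i : ℤ` such that `t^i` is a unit and adding
`t^i` to each of the given series yields a unit. -/
theorem stmt_5 (A : Type*) [CommRing A] (k : ℕ) (hk : 2 ≤ k)
    (f : Fin (k - 1) → LaurentSeries A) :
    ∃ i : ℤ, IsUnit (HahnSeries.single i (1 : A) : LaurentSeries A) ∧
      ∀ j, IsUnit (f j + HahnSeries.single i (1 : A)) := by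
  cases subsingleton_or_nontrivial A with
  | inl _ =>
    exact ⟨0, isUnit_of_subsingleton _, fun j => isUnit_of_subsingleton _⟩
  | inr _ =>
    have hne : (Finset.univ : Finset (Fin (k - 1))).Nonempty := by
      rw [Finset.univ_nonempty_iff]
      exact Fin.pos_iff_nonempty.mp (by omega)
    set i : ℤ := (Finset.univ.inf' hne fun j => (f j).order) - 1 with hi
    refine ⟨i, aux_isUnit_single i, fun j => ?_⟩
    have hij : i < (f j).order := by
      have := Finset.inf'_le (fun j => (f j).order) (Finset.mem_univ j)
      omega
    by_cases hfj : f j = 0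
    · rw [hfj, zero_add]
      exact aux_isUnit_single i
    · apply aux_isUnit_leadingCoeff_one
      have horder : (HahnSeries.single i (1 : A) : LaurentSeries A).orderTop
          < (f j).orderTop := by
        rw [HahnSeries.orderTop_single one_ne_zero,
          ← HahnSeries.order_eq_orderTop_of_ne_zero hfj]
        exact_mod_cast hij
      rw [HahnSeries.leadingCoeff_add_eq_right horder, HahnSeries.leadingCoeff_of_single]
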